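/- For any multiple relation R, the collection K_R of subsets of J_R that are not splittable for R (a subset A ⊆ J_R is splittable for R if the restriction R|A is splittable along some bipartition of A) is an integral connectivity structure on J_R: the empty set and all singletons belong to K_R, and any subcollection of K_R with nonempty intersection has its union in K_R. -/

import Mathlib

open Classical

variable {I : Type*}

/-- A `J`-family: a choice of an element of `E j` for each `j ∈ J`. -/
abbrev Fam (E : I → Type*) (J : Set I) : Type _ := ∀ j : J, E j

/-- Restriction of a `J`-family to a subset `K ⊆ J`. -/
def restrictFam {E : I → Type*} {J K : Set I} (h : K ⊆ J) (x : Fam E J) : Fam E K :=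
  fun k => x ⟨k.1, h k.2⟩

/-- Transport of a family along an equality of index sets. -/
def castFam {E : I → Type*} {J K : Set I} (h : J = K) (x : Fam E J) : Fam E K :=
  h ▸ x

/-- Two families are compatible if they agree on the intersection of their domains. -/
def Compatible {E : I → Type*} {J K : Set I} (x : Fam E J) (y : Fam E K) : Prop :=
  ∀ (i : I) (hJ : i ∈ J) (hK : i ∈ K), x ⟨i, hJ⟩ = y ⟨i, hK⟩

/-- The sum (merge) of two families: the `J ∪ K`-family restricting to `x` on `J`
(and, when `x` and `y` are compatible, to `y` on `K`). -/
noncomputable def merge {E : I → Type*} {J K : Set I} (x : Fam E J) (y : Fam E K) :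
    Fam E (J ∪ K) :=
  fun i => if h : i.1 ∈ J then x ⟨i.1, h⟩ else y ⟨i.1, i.2.resolve_left h⟩

/-- A multiple relation: a domain `dom ⊆ I` together with a graph of `dom`-families. -/
structure MRel (E : I → Type*) where
  dom : Set I
  graph : Set (Fam E dom)

/-- The join of two multiple relations. -/
def MRel.join {E : I → Type*} (R S : MRel E) : MRel E where
  dom := R.dom ∪ S.dom
  graph := {x | restrictFam Set.subset_union_left x ∈ R.graph ∧
    restrictFam Set.subset_union_right x ∈ S.graph}

/-- The restriction of a multiple relation to a subset `K` of its domain. -/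
def MRel.restr {E : I → Type*} (R : MRel E) (K : Set I) (h : K ⊆ R.dom) : MRel E :=
  ⟨K, restrictFam h '' R.graph⟩

/-- The full (trivial) relation on `J`. -/
def MRel.full (E : I → Type*) (J : Set I) : MRel E := ⟨J, Set.univ⟩

/-- Inclusion of multiple relations: equal domains and inclusion of graphs. -/
def MRel.le {E : I → Type*} (R S : MRel E) : Prop :=
  ∃ h : R.dom = S.dom, ∀ x ∈ R.graph, castFam h x ∈ S.graph

/-- `A` is splittable for `R`: `A ⊆ J_R` and the restriction `R|A` splits along
some bipartition `(K, L)` of `A`. -/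
def SplittableFor {E : I → Type*} (R : MRel E) (A : Set I) : Prop :=
  ∃ (K L : Set I) (hK : K ⊆ R.dom) (hL : L ⊆ R.dom) (hA : A ⊆ R.dom),
    K.Nonempty ∧ L.Nonempty ∧ Disjoint K L ∧ K ∪ L = A ∧
      R.restr A hA = (R.restr K hK).join (R.restr L hL)

/-- The connectivity structure of `R`: the subsets of `J_R` that are not splittable. -/
def connStruct {E : I → Type*} (R : MRel E) : Set (Set I) :=
  {A | A ⊆ R.dom ∧ ¬ SplittableFor R A}


-- auxiliary
section Aux
variable {E : I → Type*}

lemma castFam_apply {J K : Set I} (h : J = K) (x : Fam E J) (j : K) :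
    castFam h x j = x ⟨j.1, h.symm ▸ j.2⟩ := by cases h; rfl

lemma MRel.ext' {R S : MRel E} (hd : R.dom = S.dom)
    (hg : ∀ x, x ∈ R.graph ↔ castFam hd x ∈ S.graph) : R = S := by
  obtain ⟨d₁, g₁⟩ := R; obtain ⟨d₂, g₂⟩ := S
  dsimp at hd; subst hd
  simp only [MRel.mk.injEq, heq_eq_eq, true_and]
  ext x; exact hg x

lemma mem_of_eq {R S : MRel E} (h : R = S) (hd : R.dom = S.dom) (x : Fam E R.dom) :
    x ∈ R.graph ↔ castFam hd x ∈ S.graph := by subst h; exact Iff.rfl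

lemma castFam_castFam {J K : Set I} (h : J = K) (x : Fam E J) :
    castFam h.symm (castFam h x) = x := by cases h; rfl

/-- Any two members of the graph can be glued along `(K, L)`. -/
def Glue (R : MRel E) (K L : Set I) : Prop :=
  ∀ y ∈ R.graph, ∀ z ∈ R.graph, ∃ w ∈ R.graph,
    (∀ j : R.dom, j.1 ∈ K → w j = y j) ∧ (∀ j : R.dom, j.1 ∈ L → w j = z j)

lemma split_iff (R : MRel E) {K L A : Set I} (hK : K ⊆ R.dom) (hL : L ⊆ R.dom)
    (hA : A ⊆ R.dom) (hKL : K ∪ L = A) (hdisj : Disjoint K L) :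
    R.restr A hA = (R.restr K hK).join (R.restr L hL) ↔ Glue R K L := by
  constructor
  · intro heq y hy z hz
    set x : Fam E (K ∪ L) := fun j =>
      if h : j.1 ∈ K then y ⟨j.1, hK h⟩ else z ⟨j.1, hL (j.2.resolve_left h)⟩ with hx
    have hxj : x ∈ ((R.restr K hK).join (R.restr L hL)).graph := by
      constructor
      · refine ⟨y, hy, funext fun j => ?_⟩
        show y ⟨j.1, hK j.2⟩ = x ⟨j.1, Or.inl j.2⟩
        simp [hx, j.2]
      · refine ⟨z, hz, funext fun j => ?_⟩
        show z ⟨j.1, hL j.2⟩ = x ⟨j.1, Or.inr j.2⟩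
        have h' : j.1 ∉ K := Set.disjoint_right.mp hdisj j.2
        simp [hx, h']
    have hmem := (mem_of_eq heq hKL.symm (castFam hKL x)).2
    erw [castFam_castFam] at hmem
    obtain ⟨w, hw, hwx⟩ := hmem hxj
    refine ⟨w, hw, ?_, ?_⟩
    · intro j hj
      have := congrFun hwx ⟨j.1, hKL ▸ (Or.inl hj : j.1 ∈ K ∪ L)⟩
      erw [castFam_apply] at this
      show w j = y j
      calc w j = restrictFam hA w ⟨j.1, hKL ▸ (Or.inl hj : j.1 ∈ K ∪ L)⟩ := rfl
        _ = x ⟨j.1, Or.inl hj⟩ := this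
        _ = y j := by simp [hx, hj]
    · intro j hj
      have hnk : j.1 ∉ K := Set.disjoint_right.mp hdisj hj
      have := congrFun hwx ⟨j.1, hKL ▸ (Or.inr hj : j.1 ∈ K ∪ L)⟩
      erw [castFam_apply] at this
      calc w j = restrictFam hA w ⟨j.1, hKL ▸ (Or.inr hj : j.1 ∈ K ∪ L)⟩ := rfl
        _ = x ⟨j.1, Or.inr hj⟩ := this
        _ = z j := by simp [hx, hnk]
  · intro G
    refine MRel.ext' hKL.symm fun x => ⟨?_, ?_⟩
    · rintro ⟨w, hw, rfl⟩
      constructor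
      · refine ⟨w, hw, funext fun j => ?_⟩
        show w ⟨j.1, hK j.2⟩ = castFam hKL.symm (restrictFam hA w) ⟨j.1, Or.inl j.2⟩
        rw [castFam_apply]; rfl
      · refine ⟨w, hw, funext fun j => ?_⟩
        show w ⟨j.1, hL j.2⟩ = castFam hKL.symm (restrictFam hA w) ⟨j.1, Or.inr j.2⟩
        rw [castFam_apply]; rfl
    · rintro ⟨⟨y, hy, hyx⟩, ⟨z, hz, hzx⟩⟩
      obtain ⟨w, hw, hwK, hwL⟩ := G y hy z hz
      refine ⟨w, hw, funext fun j => ?_⟩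
      have hj : j.1 ∈ K ∪ L := hKL ▸ j.2
      rcases hj with h | h
      · calc restrictFam hA w j = w ⟨j.1, hK h⟩ := rfl
          _ = y ⟨j.1, hK h⟩ := hwK _ h
          _ = restrictFam hK y ⟨j.1, h⟩ := rfl
          _ = restrictFam _ (castFam hKL.symm x) ⟨j.1, h⟩ := by rw [hyx]; rfl
          _ = castFam hKL.symm x ⟨j.1, Or.inl h⟩ := rfl
          _ = x j := by exact castFam_apply _ _ _
      · calc restrictFam hA w j = w ⟨j.1, hL h⟩ := rfl
          _ = z ⟨j.1, hL h⟩ := hwL _ h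
          _ = restrictFam hL z ⟨j.1, h⟩ := rfl
          _ = restrictFam _ (castFam hKL.symm x) ⟨j.1, h⟩ := by rw [hzx]; rfl
          _ = castFam hKL.symm x ⟨j.1, Or.inr h⟩ := rfl
          _ = x j := by exact castFam_apply _ _ _

end Aux

lemma glue_symm {E : I → Type*} {R : MRel E} {K L : Set I} (G : Glue R K L) : Glue R L K :=
  fun y hy z hz => let ⟨w, hw, h1, h2⟩ := G z hz y hy; ⟨w, hw, h2, h1⟩

lemma splittable_of_glue {E : I → Type*} (R : MRel E) {K L B : Set I} (hK : K ⊆ R.dom)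
    (hL : L ⊆ R.dom) (hd : Disjoint K L) (G : Glue R K L) (hBsub : B ⊆ K ∪ L)
    (hBK : (B ∩ K).Nonempty) (hBL : (B ∩ L).Nonempty) : SplittableFor R B := by
  have hK' : B ∩ K ⊆ R.dom := fun x hx => hK hx.2
  have hL' : B ∩ L ⊆ R.dom := fun x hx => hL hx.2
  have hB : B ⊆ R.dom := fun x hx => (hBsub hx).elim (fun h => hK h) (fun h => hL h)
  have hU : (B ∩ K) ∪ (B ∩ L) = B := by
    rw [← Set.inter_union_distrib_left]; exact Set.inter_eq_left.mpr hBsub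
  have hd' : Disjoint (B ∩ K) (B ∩ L) :=
    hd.mono Set.inter_subset_right Set.inter_subset_right
  refine ⟨B ∩ K, B ∩ L, hK', hL', hB, hBK, hBL, hd', hU, ?_⟩
  exact (split_iff R hK' hL' hB hU hd').2 fun y hy z hz =>
    let ⟨w, hw, h1, h2⟩ := G y hy z hz
    ⟨w, hw, fun j hj => h1 j hj.2, fun j hj => h2 j hj.2⟩

theorem stmt18 {E : I → Type*} (R : MRel E) :
    (∅ ∈ connStruct R) ∧ (∀ i ∈ R.dom, {i} ∈ connStruct R) ∧
      (∀ C ⊆ connStruct R, (⋂₀ C).Nonempty → ⋃₀ C ∈ connStruct R) := by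
  refine ⟨⟨Set.empty_subset _, ?_⟩, ?_, ?_⟩
  · rintro ⟨K, L, hK, hL, hA, ⟨k, hk⟩, -, -, hKL, -⟩
    exact Set.notMem_empty k (hKL ▸ (Or.inl hk : k ∈ K ∪ L))
  · intro i hi
    refine ⟨Set.singleton_subset_iff.mpr hi, ?_⟩
    rintro ⟨K, L, hK, hL, hA, ⟨k, hk⟩, ⟨l, hl⟩, hd, hKL, -⟩
    have hk' : k = i := by have : k ∈ ({i} : Set I) := hKL ▸ (Or.inl hk : k ∈ K ∪ L); exact this
    have hl' : l = i := by have : l ∈ ({i} : Set I) := hKL ▸ (Or.inr hl : l ∈ K ∪ L); exact this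
    exact Set.disjoint_left.mp hd hk (hk'.trans hl'.symm ▸ hl)
  · rintro C hC ⟨a, ha⟩
    have hsub : ⋃₀ C ⊆ R.dom := fun x ⟨B, hB, hxB⟩ => (hC hB).1 hxB
    refine ⟨hsub, ?_⟩
    rintro ⟨K, L, hK, hL, hA, ⟨k, hk⟩, ⟨l, hl⟩, hd, hKL, heq⟩
    have G : Glue R K L := (split_iff R hK hL hA hKL hd).1 heq
    obtain ⟨B0, hB0, -⟩ : k ∈ ⋃₀ C := hKL ▸ (Or.inl hk : k ∈ K ∪ L)
    have haU : a ∈ K ∪ L := hKL.symm ▸ (⟨B0, hB0, ha B0 hB0⟩ : a ∈ ⋃₀ C)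
    rcases haU with haK | haL
    · obtain ⟨B, hB, hlB⟩ : l ∈ ⋃₀ C := hKL ▸ (Or.inr hl : l ∈ K ∪ L)
      exact (hC hB).2 (splittable_of_glue R hK hL hd G
        (fun x hx => hKL.symm ▸ (⟨B, hB, hx⟩ : x ∈ ⋃₀ C))
        ⟨a, ha B hB, haK⟩ ⟨l, hlB, hl⟩)
    · obtain ⟨B, hB, hkB⟩ : k ∈ ⋃₀ C := hKL ▸ (Or.inl hk : k ∈ K ∪ L)
      have := splittable_of_glue R hL hK hd.symm (glue_symm G)
        (fun x hx => (Set.union_comm K L ▸ hKL).symm ▸ (⟨B, hB, hx⟩ : x ∈ ⋃₀ C))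
        ⟨a, ha B hB, haL⟩ ⟨k, hkB, hk⟩
      exact (hC hB).2 this
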